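/- Let n ≥ k ≥ 2 be positive integers with k congruent to 2 or 3 modulo 4. Then the following are equivalent: (i) P_{n,k}(1/2) = 0; (ii) P_{n,k} is the zero polynomial; (iii) n ≥ R(k). -/

import Mathlib

open Finset

/-- The k-th diagonal Ramsey number. -/
noncomputable def diagonalRamsey (k : ℕ) : ℕ :=
  sInf {n : ℕ | 0 < n ∧ ∀ G : SimpleGraph (Fin n),
    (∃ s : Finset (Fin n), G.IsNClique k s) ∨ (∃ s : Finset (Fin n), Gᶜ.IsNClique k s)}

/-- The set of `k`-element subsets of `[n]`. -/
def ksubsets (n k : ℕ) : Finset (Finset (Fin n)) :=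
  Finset.powersetCard k (Finset.univ : Finset (Fin n))

/-- The set `A` of assignments `g` associating to each `k`-element subset `S` of `[n]`
a graph on the vertex set `S` (given by its edge set, a set of `2`-element subsets of `S`)
which is neither complete nor empty. -/
def RamseyA (n k : ℕ) : Finset (Finset (Fin n) → Finset (Finset (Fin n))) :=
  Finset.univ.filter fun g =>
    (∀ S ∈ ksubsets n k,
      g S ⊆ Finset.powersetCard 2 S ∧ g S ≠ ∅ ∧ g S ≠ Finset.powersetCard 2 S) ∧
    (∀ S, S ∉ ksubsets n k → g S = ∅)

/-- `Edges(g)`, the union of the edge sets of the graphs `g_S`. -/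
def gEdges (n k : ℕ) (g : Finset (Fin n) → Finset (Finset (Fin n))) :
    Finset (Finset (Fin n)) :=
  (ksubsets n k).biUnion g

/-- The polynomial `P_{n,k}(t) = Σ_{g ∈ A} sign(g) t^{|Edges(g)|}`. -/
noncomputable def Pnk (n k : ℕ) : Polynomial ℤ :=
  ∑ g ∈ RamseyA n k,
    Polynomial.C (∏ S ∈ ksubsets n k, (-1 : ℤ) ^ (g S).card) *
      Polynomial.X ^ (gEdges n k g).card



def ramseyBound : ℕ → ℕ → ℕ
  | 0, _ => 1
  | _+1, 0 => 1
  | s+1, t+1 => ramseyBound s (t+1) + ramseyBound (s+1) t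

lemma ramseyBound_pos (s t : ℕ) : 0 < ramseyBound s t := by
  induction s generalizing t with
  | zero => simp [ramseyBound]
  | succ s ih =>
    induction t with
    | zero => simp [ramseyBound]
    | succ t ih2 => rw [ramseyBound]; positivity

theorem ramsey_core {V : Type} [DecidableEq V] (G : SimpleGraph V) [DecidableRel G.Adj]
    (s t : ℕ) : ∀ A : Finset V, ramseyBound s t ≤ A.card →
      (∃ S ⊆ A, G.IsNClique s S) ∨ (∃ S ⊆ A, Gᶜ.IsNClique t S) := by
  induction s generalizing t with
  | zero => intro A _; exact Or.inl ⟨∅, empty_subset _, by simp⟩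
  | succ s ihs =>
    induction t with
    | zero => intro A _; exact Or.inr ⟨∅, empty_subset _, by simp⟩
    | succ t iht =>
      intro A hA
      rw [ramseyBound] at hA
      have hpos1 := ramseyBound_pos s (t+1)
      have hpos2 := ramseyBound_pos (s+1) t
      obtain ⟨v, hv⟩ : A.Nonempty := card_pos.mp (by omega)
      set B1 := (A.erase v).filter (fun u => G.Adj v u) with hB1
      set B2 := (A.erase v).filter (fun u => ¬ G.Adj v u) with hB2
      have hcards : B1.card + B2.card = (A.erase v).card :=
        card_filter_add_card_filter_not _
      have hAe : (A.erase v).card = A.card - 1 := card_erase_of_mem hv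
      have hcase : ramseyBound s (t+1) ≤ B1.card ∨ ramseyBound (s+1) t ≤ B2.card := by omega
      rcases hcase with h1 | h2
      · rcases ihs (t+1) B1 h1 with ⟨S, hS, hcl⟩ | ⟨S, hS, hcl⟩
        · refine Or.inl ⟨insert v S, ?_, hcl.insert fun b hb => (mem_filter.mp (hS hb)).2⟩
          exact insert_subset hv (hS.trans ((filter_subset _ _).trans (erase_subset _ _)))
        · exact Or.inr ⟨S, hS.trans ((filter_subset _ _).trans (erase_subset _ _)), hcl⟩
      · rcases iht B2 h2 with ⟨S, hS, hcl⟩ | ⟨S, hS, hcl⟩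
        · exact Or.inl ⟨S, hS.trans ((filter_subset _ _).trans (erase_subset _ _)), hcl⟩
        · refine Or.inr ⟨insert v S, ?_, hcl.insert fun b hb => ?_⟩
          · exact insert_subset hv (hS.trans ((filter_subset _ _).trans (erase_subset _ _)))
          · have hb' := hS hb
            rw [hB2, mem_filter, mem_erase] at hb'
            exact ⟨hb'.1.1.symm, hb'.2⟩


def RProp (n k : ℕ) : Prop :=
  ∀ G : SimpleGraph (Fin n),
    (∃ s : Finset (Fin n), G.IsNClique k s) ∨ (∃ s : Finset (Fin n), Gᶜ.IsNClique k s)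

lemma clique_comap {m n k : ℕ} (f : Fin m ↪ Fin n) (G : SimpleGraph (Fin n))
    (S : Finset (Fin m)) (h : (G.comap f).IsNClique k S) : G.IsNClique k (S.map f) := by
  obtain ⟨hcl, hcard⟩ := h
  refine ⟨?_, by simp [hcard]⟩
  intro a ha b hb hne
  simp only [coe_map, Set.mem_image, mem_coe] at ha hb
  obtain ⟨a', ha', rfl⟩ := ha
  obtain ⟨b', hb', rfl⟩ := hb
  exact hcl ha' hb' (fun e => hne (by rw [e]))

lemma RProp_mono {m n k : ℕ} (h : m ≤ n) (hm : RProp m k) : RProp n k := by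
  intro G
  rcases hm (G.comap (Fin.castLEEmb h)) with ⟨S, hS⟩ | ⟨S, hS⟩
  · exact Or.inl ⟨S.map (Fin.castLEEmb h), clique_comap _ _ _ hS⟩
  · refine Or.inr ⟨S.map (Fin.castLEEmb h), clique_comap _ _ _ ?_⟩
    have : (G.comap (Fin.castLEEmb h))ᶜ = Gᶜ.comap (Fin.castLEEmb h) := by
      ext a b
      simp only [SimpleGraph.compl_adj, SimpleGraph.comap_adj]
      constructor
      · rintro ⟨h1, h2⟩; exact ⟨fun e => h1 ((Fin.castLEEmb h).injective e), h2⟩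
      · rintro ⟨h1, h2⟩; exact ⟨fun e => h1 (by rw [e]), h2⟩
    rwa [← this]

lemma odd_choose_two {k : ℕ} (hkmod : k % 4 = 2 ∨ k % 4 = 3) : Odd (Nat.choose k 2) := by
  rw [Nat.choose_two_right]
  rcases hkmod with h | h
  · obtain ⟨m, rfl⟩ : ∃ m, k = 4 * m + 2 := ⟨k / 4, by omega⟩
    rw [show 4 * m + 2 - 1 = 4 * m + 1 from by omega,
      show (4 * m + 2) * (4 * m + 1) = 2 * ((2 * m + 1) * (4 * m + 1)) from by ring,
      Nat.mul_div_cancel_left _ (by norm_num : 0 < 2)]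
    exact ⟨4 * m * m + 3 * m, by ring⟩
  · obtain ⟨m, rfl⟩ : ∃ m, k = 4 * m + 3 := ⟨k / 4, by omega⟩
    rw [show 4 * m + 3 - 1 = 4 * m + 2 from by omega,
      show (4 * m + 3) * (4 * m + 2) = 2 * ((4 * m + 3) * (2 * m + 1)) from by ring,
      Nat.mul_div_cancel_left _ (by norm_num : 0 < 2)]
    exact ⟨4 * m * m + 5 * m + 1, by ring⟩

lemma RProp_ramseyBound (k : ℕ) : RProp (ramseyBound k k) k := by
  classical
  intro G
  rcases ramsey_core G k k Finset.univ (by simp) with ⟨S, _, h⟩ | ⟨S, _, h⟩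
  · exact Or.inl ⟨S, h⟩
  · exact Or.inr ⟨S, h⟩

lemma RProp_of_le {k n : ℕ} (h : diagonalRamsey k ≤ n) : RProp n k := by
  have hne : {m : ℕ | 0 < m ∧ RProp m k}.Nonempty :=
    ⟨ramseyBound k k, ramseyBound_pos k k, RProp_ramseyBound k⟩
  have hmem := Nat.sInf_mem hne
  exact RProp_mono h hmem.2

lemma not_RProp_of_lt {k n : ℕ} (hn : 0 < n) (h : n < diagonalRamsey k) :
    ∃ G : SimpleGraph (Fin n),
      ¬(∃ s : Finset (Fin n), G.IsNClique k s) ∧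
      ¬(∃ s : Finset (Fin n), Gᶜ.IsNClique k s) := by
  have hnm : n ∉ {m : ℕ | 0 < m ∧ RProp m k} := Nat.notMem_of_lt_sInf h
  simp only [Set.mem_setOf_eq, not_and] at hnm
  have h2 : ¬ RProp n k := hnm hn
  rw [RProp] at h2
  push_neg at h2
  obtain ⟨G, hG⟩ := h2
  exact ⟨G, fun ⟨s, hs⟩ => hG.1 s hs, fun ⟨s, hs⟩ => hG.2 s hs⟩

def graphOf {n : ℕ} (F : Finset (Finset (Fin n))) : SimpleGraph (Fin n) where
  Adj a b := a ≠ b ∧ ({a, b} : Finset (Fin n)) ∈ F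
  symm := by
    constructor
    intro a b h
    exact ⟨h.1.symm, by rw [Finset.pair_comm]; exact h.2⟩
  loopless := ⟨fun a h => h.1 rfl⟩

lemma pair_mem_pairs {n : ℕ} {S : Finset (Fin n)} {a b : Fin n}
    (ha : a ∈ S) (hb : b ∈ S) (hab : a ≠ b) :
    ({a, b} : Finset (Fin n)) ∈ Finset.powersetCard 2 S :=
  mem_powersetCard.2 ⟨insert_subset ha (singleton_subset_iff.2 hb), card_pair hab⟩

lemma exists_triv_of_le {n k : ℕ} (h : diagonalRamsey k ≤ n)
    (F : Finset (Finset (Fin n))) :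
    ∃ S ∈ ksubsets n k,
      F ∩ Finset.powersetCard 2 S = ∅ ∨ Finset.powersetCard 2 S ⊆ F := by
  rcases RProp_of_le h (graphOf F) with ⟨S, hcl, hcard⟩ | ⟨S, hcl, hcard⟩
  · refine ⟨S, mem_powersetCard.2 ⟨subset_univ _, hcard⟩, Or.inr (fun e he => ?_)⟩
    obtain ⟨hsub, hc2⟩ := mem_powersetCard.1 he
    obtain ⟨a, b, hab, rfl⟩ := card_eq_two.1 hc2
    have hadj := hcl (mem_coe.2 (hsub (by simp))) (mem_coe.2 (hsub (by simp))) hab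
    exact hadj.2
  · refine ⟨S, mem_powersetCard.2 ⟨subset_univ _, hcard⟩, Or.inl ?_⟩
    rw [eq_empty_iff_forall_notMem]
    intro e he
    rw [mem_inter] at he
    obtain ⟨heF, heP⟩ := he
    obtain ⟨hsub, hc2⟩ := mem_powersetCard.1 heP
    obtain ⟨a, b, hab, rfl⟩ := card_eq_two.1 hc2
    have hadj := hcl (mem_coe.2 (hsub (by simp))) (mem_coe.2 (hsub (by simp))) hab
    rw [SimpleGraph.compl_adj] at hadj
    exact hadj.2 ⟨hab, heF⟩

lemma exists_good_of_lt {n k : ℕ} (hn : 0 < n) (h : n < diagonalRamsey k) :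
    ∃ F₀, F₀ ⊆ Finset.powersetCard 2 (Finset.univ : Finset (Fin n)) ∧
      ∀ S ∈ ksubsets n k,
        ¬(F₀ ∩ Finset.powersetCard 2 S = ∅ ∨ Finset.powersetCard 2 S ⊆ F₀) := by
  classical
  obtain ⟨G, hG1, hG2⟩ := not_RProp_of_lt hn h
  refine ⟨(Finset.powersetCard 2 (Finset.univ : Finset (Fin n))).filter
    (fun e => ∀ a ∈ e, ∀ b ∈ e, a ≠ b → G.Adj a b), filter_subset _ _, ?_⟩
  intro S hS htriv
  have hcard : S.card = k := (mem_powersetCard.1 hS).2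
  rcases htriv with h1 | h2
  · refine hG2 ⟨S, ?_, hcard⟩
    intro a ha b hb hab
    rw [SimpleGraph.compl_adj]
    refine ⟨hab, fun hadj => ?_⟩
    have hmem : ({a, b} : Finset (Fin n)) ∈
        (Finset.powersetCard 2 (Finset.univ : Finset (Fin n))).filter
          (fun e => ∀ a ∈ e, ∀ b ∈ e, a ≠ b → G.Adj a b) := by
      refine mem_filter.2 ⟨pair_mem_pairs (mem_univ a) (mem_univ b) hab, ?_⟩
      intro x hx y hy hxy
      simp only [mem_insert, mem_singleton] at hx hy
      rcases hx with rfl | rfl <;> rcases hy with rfl | rfl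
      · exact absurd rfl hxy
      · exact hadj
      · exact hadj.symm
      · exact absurd rfl hxy
    rw [eq_empty_iff_forall_notMem] at h1
    exact h1 _ (mem_inter.2 ⟨hmem, pair_mem_pairs (mem_coe.1 ha) (mem_coe.1 hb) hab⟩)
  · refine hG1 ⟨S, ?_, hcard⟩
    intro a ha b hb hab
    have hpair := h2 (pair_mem_pairs (mem_coe.1 ha) (mem_coe.1 hb) hab)
    have hprop := (mem_filter.1 hpair).2
    exact hprop a (by simp) b (by simp) hab


def sgn (n k : ℕ) (g : Finset (Fin n) → Finset (Finset (Fin n))) : ℤ :=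
  ∏ S ∈ ksubsets n k, (-1 : ℤ) ^ (g S).card

def choicesF (n : ℕ) (F : Finset (Finset (Fin n))) (S : Finset (Fin n)) : Finset (Finset (Finset (Fin n))) :=
  (F ∩ Finset.powersetCard 2 S).powerset.filter
    (fun E => ¬(E = ∅ ∨ E = Finset.powersetCard 2 S))

def cF (n : ℕ) (F : Finset (Finset (Fin n))) (S : Finset (Fin n)) : ℤ :=
  if (F ∩ Finset.powersetCard 2 S = ∅ ∨ Finset.powersetCard 2 S ⊆ F) then 0 else -1

lemma mem_RamseyA {n k : ℕ} {g : Finset (Fin n) → Finset (Finset (Fin n))} :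
    g ∈ RamseyA n k ↔
      (∀ S ∈ ksubsets n k,
        g S ⊆ Finset.powersetCard 2 S ∧ g S ≠ ∅ ∧ g S ≠ Finset.powersetCard 2 S) ∧
      (∀ S, S ∉ ksubsets n k → g S = ∅) := by
  simp [RamseyA]

lemma sum_choices {n k : ℕ} (hk : 2 ≤ k) (hodd : Odd (Nat.choose k 2))
    {S : Finset (Fin n)} (hS : S ∈ ksubsets n k) (F : Finset (Finset (Fin n))) :
    ∑ E ∈ choicesF n F S, (-1 : ℤ) ^ E.card = cF n F S := by
  set P := Finset.powersetCard 2 S with hP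
  have hPcard : P.card = Nat.choose k 2 := by
    rw [hP, card_powersetCard, (mem_powersetCard.1 hS).2]
  have hPne : P ≠ ∅ := by
    intro h
    have := Nat.choose_pos (n := k) (k := 2) hk
    rw [h, card_empty] at hPcard
    omega
  have hsplit := Finset.sum_filter_add_sum_filter_not ((F ∩ P).powerset)
    (fun E => (E = ∅ ∨ E = P)) (fun E => (-1 : ℤ) ^ E.card)
  by_cases h1 : F ∩ P = ∅
  · rw [cF, if_pos (Or.inl h1)]
    simp [choicesF, ← hP, h1, Finset.filter_singleton]
  · have hne' : (F ∩ P).Nonempty := nonempty_iff_ne_empty.2 h1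
    have htot : ∑ E ∈ (F ∩ P).powerset, (-1 : ℤ) ^ E.card = 0 :=
      sum_powerset_neg_one_pow_card_of_nonempty hne'
    by_cases h2 : P ⊆ F
    · have hFP : F ∩ P = P := inter_eq_right.2 h2
      have hset : (F ∩ P).powerset.filter (fun E => E = ∅ ∨ E = P) = {∅, P} := by
        ext E
        simp only [mem_filter, mem_powerset, hFP, mem_insert, mem_singleton]
        constructor
        · rintro ⟨_, h⟩; exact h
        · rintro (rfl | rfl)
          · exact ⟨empty_subset _, Or.inl rfl⟩
          · exact ⟨Finset.Subset.rfl, Or.inr rfl⟩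
      rw [cF, if_pos (Or.inr h2)]
      have hsum2 : ∑ E ∈ ({∅, P} : Finset (Finset (Finset (Fin n)))),
          (-1 : ℤ) ^ E.card = 0 := by
        rw [Finset.sum_pair (Ne.symm hPne)]
        rw [card_empty, hPcard, pow_zero, Odd.neg_one_pow hodd]
        ring
      have : ∑ E ∈ choicesF n F S, (-1 : ℤ) ^ E.card
          = ∑ E ∈ (F ∩ P).powerset, (-1 : ℤ) ^ E.card
            - ∑ E ∈ (F ∩ P).powerset.filter (fun E => E = ∅ ∨ E = P),
                (-1 : ℤ) ^ E.card := by
        rw [← hsplit]; ring_nf; rfl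
      rw [this, htot, hset, hsum2]; ring
    · have hset : (F ∩ P).powerset.filter (fun E => E = ∅ ∨ E = P) = {∅} := by
        ext E
        simp only [mem_filter, mem_powerset, mem_singleton]
        constructor
        · rintro ⟨hsub, (rfl | rfl)⟩
          · rfl
          · exact absurd (fun x hx => (mem_inter.1 (hsub hx)).1) h2
        · rintro rfl; exact ⟨empty_subset _, Or.inl rfl⟩
      rw [cF, if_neg (by tauto)]
      have : ∑ E ∈ choicesF n F S, (-1 : ℤ) ^ E.card
          = ∑ E ∈ (F ∩ P).powerset, (-1 : ℤ) ^ E.card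
            - ∑ E ∈ (F ∩ P).powerset.filter (fun E => E = ∅ ∨ E = P),
                (-1 : ℤ) ^ E.card := by
        rw [← hsplit]; ring_nf; rfl
      rw [this, htot, hset]
      simp

lemma gS_subset_edges {n k : ℕ} {g} {S : Finset (Fin n)} (hS : S ∈ ksubsets n k) :
    g S ⊆ gEdges n k g := Finset.subset_biUnion_of_mem g hS

lemma Bsum_eq_prod {n k : ℕ} (hk : 2 ≤ k) (hodd : Odd (Nat.choose k 2))
    (F : Finset (Finset (Fin n))) :
    ∑ g ∈ (RamseyA n k).filter (fun g => gEdges n k g ⊆ F), sgn n k g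
      = ∏ S ∈ ksubsets n k, cF n F S := by
  have h1 : ∏ S ∈ ksubsets n k, cF n F S
      = ∏ S ∈ ksubsets n k, ∑ E ∈ choicesF n F S, (-1 : ℤ) ^ E.card :=
    prod_congr rfl (fun S hS => (sum_choices hk hodd hS F).symm)
  rw [h1, Finset.prod_sum]
  refine Finset.sum_nbij' (fun g => fun S hS => g S)
    (fun p => fun S => if h : S ∈ ksubsets n k then p S h else ∅) ?_ ?_ ?_ ?_ ?_
  · -- maps into pi
    intro g hg
    rw [mem_filter] at hg
    obtain ⟨hgA, hgF⟩ := hg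
    obtain ⟨hgA1, hgA2⟩ := mem_RamseyA.1 hgA
    rw [Finset.mem_pi]
    intro S hS
    obtain ⟨hP, hne, hnP⟩ := hgA1 S hS
    refine mem_filter.2 ⟨mem_powerset.2 (subset_inter ?_ hP), by tauto⟩
    exact (gS_subset_edges hS).trans hgF
  · -- maps into filter
    intro p hp
    rw [Finset.mem_pi] at hp
    refine mem_filter.2 ⟨mem_RamseyA.2 ⟨?_, ?_⟩, ?_⟩
    · intro S hS
      have := mem_filter.1 (hp S hS)
      obtain ⟨hpow, hprop⟩ := this
      rw [mem_powerset] at hpow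
      simp only [dif_pos hS]
      push_neg at hprop
      exact ⟨hpow.trans inter_subset_right, hprop.1.ne_empty, hprop.2⟩
    · intro S hS; simp only [dif_neg hS]
    · rw [gEdges]
      refine Finset.biUnion_subset.2 (fun S hS => ?_)
      simp only [dif_pos hS]
      have := mem_filter.1 (hp S hS)
      rw [mem_powerset] at this
      exact this.1.trans inter_subset_left
  · -- left inverse
    intro g hg
    funext S
    by_cases h : S ∈ ksubsets n k
    · simp only [dif_pos h]
    · simp only [dif_neg h]
      exact ((mem_RamseyA.1 (mem_filter.1 hg).1).2 S h).symm
  · -- right inverse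
    intro p hp
    funext S hS
    simp only [dif_pos hS]
  · -- weights
    intro g hg
    rw [sgn]
    exact (Finset.prod_attach (ksubsets n k) (fun S => (-1 : ℤ) ^ (g S).card)).symm

def fE (n k : ℕ) (E : Finset (Finset (Fin n))) : ℤ :=
  ∑ g ∈ (RamseyA n k).filter (fun g => gEdges n k g = E), sgn n k g

lemma sum_fE_powerset {n k : ℕ} (E : Finset (Finset (Fin n))) :
    ∑ F ∈ E.powerset, fE n k F
      = ∑ g ∈ (RamseyA n k).filter (fun g => gEdges n k g ⊆ E), sgn n k g := by
  have hmaps : ∀ g ∈ (RamseyA n k).filter (fun g => gEdges n k g ⊆ E),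
      gEdges n k g ∈ E.powerset := fun g hg => mem_powerset.2 (mem_filter.1 hg).2
  rw [← Finset.sum_fiberwise_of_maps_to hmaps (sgn n k)]
  refine sum_congr rfl (fun F hF => ?_)
  rw [mem_powerset] at hF
  unfold fE
  congr 1
  rw [Finset.filter_filter]
  refine Finset.filter_congr (fun g _ => ?_)
  exact (and_iff_right_iff_imp.2 (fun h => by rw [h]; exact hF)).symm

lemma gEdges_subset_W {n k : ℕ} {g} (hg : g ∈ RamseyA n k) :
    gEdges n k g ⊆ Finset.powersetCard 2 (Finset.univ : Finset (Fin n)) := by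
  refine Finset.biUnion_subset.2 (fun S hS => ?_)
  exact ((mem_RamseyA.1 hg).1 S hS).1.trans (powersetCard_mono (subset_univ S))

lemma card_filter_supset {α : Type*} [DecidableEq α] (W E : Finset α) (hE : E ⊆ W) :
    (W.powerset.filter (fun F => E ⊆ F)).card = 2 ^ (W.card - E.card) := by
  have himg : W.powerset.filter (fun F => E ⊆ F)
      = (W \ E).powerset.image (fun A => A ∪ E) := by
    ext F
    simp only [mem_filter, mem_powerset, mem_image]
    constructor
    · rintro ⟨hFW, hEF⟩
      refine ⟨F \ E, sdiff_subset_sdiff hFW Finset.Subset.rfl, ?_⟩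
      rw [sdiff_union_self_eq_union, union_eq_left.2 hEF]
    · rintro ⟨A, hA, rfl⟩
      exact ⟨union_subset (hA.trans (sdiff_subset)) hE, subset_union_right⟩
  rw [himg, Finset.card_image_of_injOn, card_powerset, card_sdiff_of_subset hE]
  intro A hA B hB hAB
  rw [mem_coe, mem_powerset] at hA hB
  have dA : Disjoint A E := Finset.sdiff_disjoint.mono_left hA
  have dB : Disjoint B E := Finset.sdiff_disjoint.mono_left hB
  dsimp only at hAB
  have : (A ∪ E) \ E = (B ∪ E) \ E := by rw [hAB]
  rwa [union_sdiff_cancel_right dA, union_sdiff_cancel_right dB] at this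


lemma Pnk_eq (n k : ℕ) :
    Pnk n k = ∑ E ∈ (Finset.powersetCard 2 (Finset.univ : Finset (Fin n))).powerset,
      Polynomial.C (fE n k E) * Polynomial.X ^ E.card := by
  have hmaps : ∀ g ∈ RamseyA n k,
      gEdges n k g ∈ (Finset.powersetCard 2 (Finset.univ : Finset (Fin n))).powerset :=
    fun g hg => mem_powerset.2 (gEdges_subset_W hg)
  have hPnk : Pnk n k = ∑ g ∈ RamseyA n k,
      Polynomial.C (sgn n k g) * Polynomial.X ^ (gEdges n k g).card := rfl
  rw [hPnk, ← Finset.sum_fiberwise_of_maps_to hmaps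
    (fun g => Polynomial.C (sgn n k g) * Polynomial.X ^ (gEdges n k g).card)]
  refine sum_congr rfl (fun E _ => ?_)
  rw [fE, map_sum, Finset.sum_mul]
  refine sum_congr rfl (fun g hg => ?_)
  rw [(mem_filter.1 hg).2]

lemma Pnk_eq_zero_of_triv {n k : ℕ} (hk : 2 ≤ k) (hodd : Odd (Nat.choose k 2))
    (htriv : ∀ F : Finset (Finset (Fin n)), ∃ S ∈ ksubsets n k,
      F ∩ Finset.powersetCard 2 S = ∅ ∨ Finset.powersetCard 2 S ⊆ F) :
    Pnk n k = 0 := by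
  have hvan : ∀ m (E : Finset (Finset (Fin n))), E.card = m → fE n k E = 0 := by
    intro m
    induction m using Nat.strong_induction_on with
    | _ m ih =>
      intro E hEm
      have hBsum : ∑ F ∈ E.powerset, fE n k F = 0 := by
        rw [sum_fE_powerset, Bsum_eq_prod hk hodd]
        obtain ⟨S, hS, hStriv⟩ := htriv E
        exact Finset.prod_eq_zero hS (by rw [cF, if_pos hStriv])
      have herase : ∀ F ∈ E.powerset.erase E, fE n k F = 0 := by
        intro F hF
        rw [mem_erase, mem_powerset] at hF
        exact ih F.card (hEm ▸ card_lt_card (lt_of_le_of_ne hF.2 hF.1)) F rfl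
      have := Finset.add_sum_erase E.powerset (fE n k) (mem_powerset_self E)
      rw [Finset.sum_eq_zero herase, add_zero] at this
      rw [this]; exact hBsum
  rw [Pnk_eq]
  refine Finset.sum_eq_zero (fun E _ => ?_)
  rw [hvan E.card E rfl]
  simp

lemma eval_Pnk (n k : ℕ) :
    (2 : ℝ) ^ (Finset.powersetCard 2 (Finset.univ : Finset (Fin n))).card
        * Polynomial.aeval ((1 : ℝ) / 2) (Pnk n k)
      = ((∑ F ∈ (Finset.powersetCard 2 (Finset.univ : Finset (Fin n))).powerset,
          ∑ g ∈ (RamseyA n k).filter (fun g => gEdges n k g ⊆ F), sgn n k g : ℤ) : ℝ) := by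
  set W := Finset.powersetCard 2 (Finset.univ : Finset (Fin n)) with hW
  have hswap : (∑ F ∈ W.powerset,
        ∑ g ∈ (RamseyA n k).filter (fun g => gEdges n k g ⊆ F), sgn n k g)
      = ∑ g ∈ RamseyA n k, sgn n k g * 2 ^ (W.card - (gEdges n k g).card) := by
    have h1 : ∀ F, ∑ g ∈ (RamseyA n k).filter (fun g => gEdges n k g ⊆ F), sgn n k g
        = ∑ g ∈ RamseyA n k, if gEdges n k g ⊆ F then sgn n k g else 0 :=
      fun F => Finset.sum_filter _ _
    rw [sum_congr rfl (fun F _ => h1 F), Finset.sum_comm]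
    refine sum_congr rfl (fun g hg => ?_)
    rw [← Finset.sum_filter, Finset.sum_const,
      card_filter_supset W _ (gEdges_subset_W hg), nsmul_eq_mul]
    push_cast
    ring
  have hL : Polynomial.aeval ((1 : ℝ) / 2) (Pnk n k)
      = ∑ g ∈ RamseyA n k, (sgn n k g : ℝ) * ((1 : ℝ) / 2) ^ (gEdges n k g).card := by
    have hPnk : Pnk n k = ∑ g ∈ RamseyA n k,
        Polynomial.C (sgn n k g) * Polynomial.X ^ (gEdges n k g).card := rfl
    rw [hPnk, map_sum]
    refine sum_congr rfl (fun g _ => ?_)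
    rw [map_mul, map_pow, Polynomial.aeval_X, Polynomial.aeval_C]
    simp
  rw [hL, hswap, Finset.mul_sum]
  push_cast
  refine sum_congr rfl (fun g hg => ?_)
  have he : (gEdges n k g).card ≤ W.card := card_le_card (gEdges_subset_W hg)
  set e := (gEdges n k g).card
  set s := ((sgn n k g : ℤ) : ℝ)
  have h2 : (2 : ℝ) ^ (W.card - e) * 2 ^ e = 2 ^ W.card := by
    rw [← pow_add, Nat.sub_add_cancel he]
  calc (2 : ℝ) ^ W.card * (s * ((1 : ℝ)/2) ^ e)
      = s * 2 ^ (W.card - e) * (2 ^ e * ((1 : ℝ)/2) ^ e) := by rw [← h2]; ring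
    _ = s * 2 ^ (W.card - e) := by rw [← mul_pow]; norm_num

lemma total_ne_zero {n k : ℕ} (hk : 2 ≤ k) (hodd : Odd (Nat.choose k 2))
    {F₀ : Finset (Finset (Fin n))}
    (hF₀ : F₀ ⊆ Finset.powersetCard 2 (Finset.univ : Finset (Fin n)))
    (hgood : ∀ S ∈ ksubsets n k,
      ¬(F₀ ∩ Finset.powersetCard 2 S = ∅ ∨ Finset.powersetCard 2 S ⊆ F₀)) :
    (∑ F ∈ (Finset.powersetCard 2 (Finset.univ : Finset (Fin n))).powerset,
        ∑ g ∈ (RamseyA n k).filter (fun g => gEdges n k g ⊆ F), sgn n k g) ≠ 0 := by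
  set W := Finset.powersetCard 2 (Finset.univ : Finset (Fin n)) with hW
  have hrw : (∑ F ∈ W.powerset,
        ∑ g ∈ (RamseyA n k).filter (fun g => gEdges n k g ⊆ F), sgn n k g)
      = ∑ F ∈ W.powerset, ∏ S ∈ ksubsets n k, cF n F S :=
    sum_congr rfl (fun F _ => Bsum_eq_prod hk hodd F)
  intro h0
  rw [hrw] at h0
  set ε : ℤ := (-1) ^ (ksubsets n k).card with hε
  have hee : ε * ε = 1 := by rw [hε, ← pow_add]; exact Even.neg_one_pow ⟨_, rfl⟩
  have key : ∀ F : Finset (Finset (Fin n)),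
      (∀ S ∈ ksubsets n k,
        ¬(F ∩ Finset.powersetCard 2 S = ∅ ∨ Finset.powersetCard 2 S ⊆ F)) →
      ∏ S ∈ ksubsets n k, cF n F S = ε := by
    intro F hF
    calc ∏ S ∈ ksubsets n k, cF n F S = ∏ _S ∈ ksubsets n k, (-1 : ℤ) :=
          prod_congr rfl (fun S hS => by rw [cF, if_neg (hF S hS)])
      _ = ε := by rw [prod_const, hε]
  have hterm : ∀ F ∈ W.powerset, 0 ≤ ε * ∏ S ∈ ksubsets n k, cF n F S := by
    intro F _
    by_cases hall : ∀ S ∈ ksubsets n k,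
        ¬(F ∩ Finset.powersetCard 2 S = ∅ ∨ Finset.powersetCard 2 S ⊆ F)
    · rw [key F hall, hee]; norm_num
    · push_neg at hall
      obtain ⟨S, hS, htriv⟩ := hall
      rw [Finset.prod_eq_zero hS (by rw [cF, if_pos htriv]), mul_zero]
  have hle : (1 : ℤ) ≤ ∑ F ∈ W.powerset, ε * ∏ S ∈ ksubsets n k, cF n F S := by
    have h1 := Finset.single_le_sum hterm (mem_powerset.2 hF₀)
    rwa [key F₀ hgood, hee] at h1
  rw [← Finset.mul_sum, h0, mul_zero] at hle
  exact absurd hle (by norm_num)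

theorem stmt_8 (n k : ℕ) (hk : 2 ≤ k) (hkn : k ≤ n)
    (hkmod : k % 4 = 2 ∨ k % 4 = 3) :
    (Polynomial.aeval ((1 : ℝ) / 2) (Pnk n k) = 0 ↔ Pnk n k = 0) ∧
      (Pnk n k = 0 ↔ diagonalRamsey k ≤ n) := by
  have hodd := odd_choose_two hkmod
  have key1 : ¬ diagonalRamsey k ≤ n → Polynomial.aeval ((1 : ℝ) / 2) (Pnk n k) ≠ 0 := by
    intro hlt heval
    have hn : 0 < n := by omega
    obtain ⟨F₀, hF₀W, hgood⟩ := exists_good_of_lt hn (not_le.1 hlt)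
    have htne := total_ne_zero hk hodd hF₀W hgood
    have hev := eval_Pnk n k
    rw [heval, mul_zero] at hev
    exact htne (by exact_mod_cast hev.symm)
  have key2 : diagonalRamsey k ≤ n → Pnk n k = 0 := fun h =>
    Pnk_eq_zero_of_triv hk hodd (exists_triv_of_le h)
  refine ⟨⟨fun h0 => ?_, fun h => by rw [h, map_zero]⟩, ⟨fun h => ?_, key2⟩⟩
  · have hR : diagonalRamsey k ≤ n := by
      by_contra hc
      exact key1 hc h0
    exact key2 hR
  · have h0 : Polynomial.aeval ((1 : ℝ) / 2) (Pnk n k) = 0 := by rw [h, map_zero]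
    by_contra hc
    exact key1 hc h0
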